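/- (Main composition lemma for formal power series, 1-dimensional case.) Let g(z) = Σ_{l≥1} g_l z^l and h(x) = Σ_{k≥1} h_k x^k be formal power series over ℂ without constant term. Suppose w, m are weights with w_l m_{k_1}⋯m_{k_l} ≤ λ^k m_k for all l ≥ 1 and k_1,…,k_l ≥ 1 with k_1+⋯+k_l = k. Then for every n ≥ 1, the n-th coefficient c_n of g∘h satisfies |c_n|/m_n ≤ λ^n · [x^n]( G∘H )(x), where G(z) = Σ_{l≥1} (|g_l|/w_l) z^l and H(x) = Σ_{k≥1} (|h_k|/m_k) x^k. -/

import Mathlib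

/-- Main composition lemma for formal power series (one-dimensional case):
if `w_l m_{k₁} ⋯ m_{k_l} ≤ λ^k m_k` whenever `k₁ + ⋯ + k_l = k`, then the
coefficients of `g ∘ h` are majorized by those of `G ∘ H` composed with `λ x`. -/
theorem stmt_14 (g h : ℕ → ℂ) (w m : ℕ → ℝ)
    (hw : ∀ n, 1 ≤ n → 0 < w n) (hm : ∀ n, 1 ≤ n → 0 < m n)
    (lam : ℝ) (hlam : 1 ≤ lam)
    (hyp : ∀ ks : List ℕ, ks ≠ [] → (∀ i ∈ ks, 1 ≤ i) →
      w ks.length * (ks.map m).prod ≤ lam ^ ks.sum * m ks.sum)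
    (n : ℕ) (hn : 1 ≤ n) :
    ‖∑ p : Composition n, g p.length * ∏ i, h (p.blocksFun i)‖ / m n ≤
      lam ^ n * ∑ p : Composition n,
        (‖g p.length‖ / w p.length) *
          ∏ i, ‖h (p.blocksFun i)‖ / m (p.blocksFun i) := by
  have hmn := hm n hn
  rw [div_le_iff₀ hmn, Finset.mul_sum, Finset.sum_mul]
  calc ‖∑ p : Composition n, g p.length * ∏ i, h (p.blocksFun i)‖
      ≤ ∑ p : Composition n, ‖g p.length * ∏ i, h (p.blocksFun i)‖ :=
        norm_sum_le _ _
    _ ≤ _ := by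
        apply Finset.sum_le_sum
        intro p _
        rw [norm_mul, norm_prod]
        have hlen : 0 < p.length := p.length_pos_of_pos (by omega)
        have hW := hw p.length hlen
        have hQ : 0 < ∏ i, m (p.blocksFun i) :=
          Finset.prod_pos fun i _ => hm _ (p.one_le_blocksFun i)
        have hne : p.blocks ≠ [] := by
          intro hb
          have := p.blocks_sum
          rw [hb] at this
          simp at this; omega
        have key : w p.length * ∏ i, m (p.blocksFun i) ≤ lam ^ n * m n := by
          have := hyp p.blocks hne (fun i hi => p.one_le_blocks hi)
          rw [p.blocks_sum] at this
          have hmap : (p.blocks.map m).prod = ∏ i, m (p.blocksFun i) := by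
            rw [← p.ofFn_blocksFun, List.map_ofFn, List.prod_ofFn]
            rfl
          rwa [p.blocks_length, hmap] at this
        rw [Finset.prod_div_distrib]
        have heq : lam ^ n * (‖g p.length‖ / w p.length *
            ((∏ i, ‖h (p.blocksFun i)‖) / ∏ i, m (p.blocksFun i))) * m n
            = (‖g p.length‖ * ∏ i, ‖h (p.blocksFun i)‖) *
              ((lam ^ n * m n) / (w p.length * ∏ i, m (p.blocksFun i))) := by
          field_simp
        rw [heq]
        refine le_mul_of_one_le_right (by positivity) ?_
        rw [one_le_div (by positivity)]
        exact key
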